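/- Let D be a positive integer with D ≡ 1 (mod 6), and let c : ℤ → ℂ be a function such that c(r) = c(r') whenever r ≡ r' (mod D) and c(−r) = c(r) for all r ∈ ℤ. Let S = {r ∈ ℤ : 0 ≤ r < 6D, r ≡ 1 (mod 6), gcd(r,D) = 1}. Then for every z ∈ ℂ with Im z > 0: ∑_{r ∈ S} c(r) · θ_{r,1/2}(z) = 0. -/

import Mathlib

open Complex

/-- For a fixed positive integer `D`, `r ∈ ℤ`, `μ ∈ ℝ`:
`θ_{r,μ}(z) = ∑_{n∈ℤ} (−1)ⁿ exp(πi(n + r/D − μ)²z)`. -/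
noncomputable def thetaRMu (D : ℕ) (r : ℤ) (μ : ℝ) (z : ℂ) : ℂ :=
  ∑' n : ℤ, (-1 : ℂ) ^ n *
    Complex.exp (Real.pi * Complex.I * ((n : ℂ) + (r : ℂ) / (D : ℂ) - (μ : ℂ)) ^ 2 * z)

lemma neg_one_zpow_mul_self (n : ℤ) : (-1 : ℂ) ^ n * (-1 : ℂ) ^ n = 1 := by
  rw [← zpow_add₀ (by norm_num : (-1 : ℂ) ≠ 0), ← two_mul, zpow_mul]
  norm_num

lemma neg_one_zpow_inv (n : ℤ) : ((-1 : ℂ) ^ n)⁻¹ = (-1 : ℂ) ^ n :=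
  inv_eq_of_mul_eq_one_left (neg_one_zpow_mul_self n)

/-- Reflection: for even `a`, `θ_{aD - r, 1/2} = -θ_{r, 1/2}`. -/
lemma thetaRMu_flip (D : ℕ) (hD : 0 < D) (a r : ℤ) (ha : a % 2 = 0) (z : ℂ) :
    thetaRMu D (a * (D : ℤ) - r) (1/2) z = - thetaRMu D r (1/2) z := by
  have hD0 : (D : ℂ) ≠ 0 := Nat.cast_ne_zero.mpr hD.ne'
  have h1 : (-1 : ℂ) ≠ 0 := by norm_num
  obtain ⟨b, hb⟩ : Even a := Int.even_iff.mpr ha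
  unfold thetaRMu
  rw [← tsum_neg, ← (Equiv.subLeft (1 - a)).tsum_eq]
  refine tsum_congr fun n => ?_
  simp only [Equiv.subLeft_apply]
  have hsign : (-1 : ℂ) ^ (1 - a - n) = -(-1 : ℂ) ^ n := by
    rw [zpow_sub₀ h1, zpow_sub₀ h1, zpow_one, hb,
      zpow_add₀ h1, neg_one_zpow_mul_self, div_one, div_eq_mul_inv, neg_one_zpow_inv]
    ring
  have hexp : (((1 - a - n : ℤ) : ℂ) + ((a * (D : ℤ) - r : ℤ) : ℂ) / (D : ℂ)
      - ((1/2 : ℝ) : ℂ)) ^ 2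
      = (((n : ℤ) : ℂ) + ((r : ℤ) : ℂ) / (D : ℂ) - ((1/2 : ℝ) : ℂ)) ^ 2 := by
    push_cast
    field_simp
    ring
  rw [hsign, hexp]
  ring

lemma gcd_mul_sub (k D r : ℕ) (h : r ≤ k * D) (hc : Nat.gcd r D = 1) :
    Nat.gcd (k * D - r) D = 1 := by
  have hdr : Nat.gcd (k * D - r) D ∣ r := by
    have h2 : Nat.gcd (k * D - r) D ∣ k * D - (k * D - r) :=
      Nat.dvd_sub ((Nat.gcd_dvd_right (k * D - r) D).mul_left k)
        (Nat.gcd_dvd_left (k * D - r) D)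
    simpa [Nat.sub_sub_self h] using h2
  have := Nat.dvd_gcd hdr (Nat.gcd_dvd_right (k * D - r) D)
  rw [hc] at this
  exact Nat.dvd_one.mp this

/-- For `D ≡ 1 (mod 6)` and coefficients `c` that are `D`-periodic and even,
the linear combination `∑_{r ∈ S} c(r) θ_{r,1/2}(z)` over the set
`S = {0 ≤ r < 6D : r ≡ 1 (mod 6), gcd(r,D) = 1}` vanishes. -/
theorem sum_thetaRMu_half_eq_zero (D : ℕ) (hD : 0 < D) (hD6 : D % 6 = 1)
    (c : ℤ → ℂ) (hper : ∀ r r' : ℤ, r % (D : ℤ) = r' % (D : ℤ) → c r = c r')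
    (heven : ∀ r : ℤ, c (-r) = c r) (z : ℂ) (hz : 0 < z.im) :
    ∑ r ∈ (Finset.range (6 * D)).filter (fun r => r % 6 = 1 ∧ Nat.gcd r D = 1),
      c (r : ℤ) * thetaRMu D (r : ℤ) (1/2) z = 0 := by
  set S := (Finset.range (6 * D)).filter (fun r => r % 6 = 1 ∧ Nat.gcd r D = 1) with hS
  have memS : ∀ r, r ∈ S ↔ r < 6 * D ∧ r % 6 = 1 ∧ Nat.gcd r D = 1 := by
    intro r
    simp [hS, Finset.mem_filter, Finset.mem_range, and_assoc]
  -- key pointwise fact: for r ≤ k*D with k even, f (k*D - r) = - f r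
  have key : ∀ (k : ℕ) (r : ℕ), k % 2 = 0 → r ≤ k * D →
      c ((k * D - r : ℕ) : ℤ) * thetaRMu D ((k * D - r : ℕ) : ℤ) (1/2) z
        = - (c (r : ℤ) * thetaRMu D (r : ℤ) (1/2) z) := by
    intro k r hk hle
    have hcast : ((k * D - r : ℕ) : ℤ) = (k : ℤ) * (D : ℤ) - (r : ℤ) := by
      push_cast [hle]; ring
    have hcc : c ((k * D - r : ℕ) : ℤ) = c (r : ℤ) := by
      rw [hcast]
      have h1 : ((k : ℤ) * (D : ℤ) - (r : ℤ)) % (D : ℤ) = (-(r : ℤ)) % (D : ℤ) := by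
        have : (k : ℤ) * (D : ℤ) - (r : ℤ) = -(r : ℤ) + (D : ℤ) * k := by ring
        rw [this, Int.add_mul_emod_self_left]
      rw [hper _ _ h1, heven]
    have hth : thetaRMu D ((k * D - r : ℕ) : ℤ) (1/2) z
        = - thetaRMu D (r : ℤ) (1/2) z := by
      rw [hcast]
      exact thetaRMu_flip D hD (k : ℤ) (r : ℤ) (by omega) z
    rw [hcc, hth]
    ring
  -- the involution
  refine Finset.sum_involution
    (fun r _ => if r < 2 * D then 2 * D - r else 8 * D - r) ?_ ?_ ?_ ?_
  · -- f r + f (g r) = 0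
    intro r hr
    rw [memS] at hr
    obtain ⟨h6, hm, hg⟩ := hr
    by_cases h2 : r < 2 * D
    · rw [if_pos h2, key 2 r rfl (le_of_lt h2)]
      ring
    · rw [if_neg h2, key 8 r rfl (by omega)]
      ring
  · -- g r ≠ r when f r ≠ 0
    intro r hr hfr
    rw [memS] at hr
    obtain ⟨h6, hm, hg⟩ := hr
    intro hfix
    apply hfr
    by_cases h2 : r < 2 * D
    · rw [if_pos h2] at hfix
      have h := key 2 r rfl (le_of_lt h2)
      rw [hfix] at h
      have h2' : (2 : ℂ) * (c (r : ℤ) * thetaRMu D (r : ℤ) (1/2) z) = 0 := by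
        linear_combination h
      simpa using h2'
    · rw [if_neg h2] at hfix
      have h := key 8 r rfl (by omega)
      rw [hfix] at h
      have h2' : (2 : ℂ) * (c (r : ℤ) * thetaRMu D (r : ℤ) (1/2) z) = 0 := by
        linear_combination h
      simpa using h2'
  · -- g maps S into S
    intro r hr
    rw [memS] at hr ⊢
    obtain ⟨h6, hm, hg⟩ := hr
    by_cases h2 : r < 2 * D
    · rw [if_pos h2]
      refine ⟨by omega, by omega, gcd_mul_sub 2 D r (le_of_lt h2) hg⟩
    · rw [if_neg h2]
      have h2D : 2 * D % 6 = 2 := by omega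
      refine ⟨by omega, by omega, gcd_mul_sub 8 D r (by omega) hg⟩
  · -- g involutive
    intro r hr
    rw [memS] at hr
    obtain ⟨h6, hm, hg⟩ := hr
    by_cases h2 : r < 2 * D
    · have hr1 : 1 ≤ r := by omega
      rw [if_pos h2]
      have : 2 * D - r < 2 * D := by omega
      rw [if_pos this]
      omega
    · rw [if_neg h2]
      have hgt : 2 * D < r := by omega
      have : ¬ (8 * D - r < 2 * D) := by omega
      rw [if_neg this]
      omega
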